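/- Let (Ω, P) be a finite probability space with binary random variables ỹ, y* : Ω → {0,1}, with all four events {y*=r, ỹ=c} having positive probability. Define LB = Σ_r P(ỹ=1|y*=r)·P(y*=r|ỹ=1) and UB = Σ_r P(ỹ=1|y*=r)·P(y*=r|ỹ=0). If the noise rates satisfy P(ỹ=0|y*=1) < 1/2 and P(ỹ=1|y*=0) < 1/2, then UB ≤ LB. -/

import Mathlib

open Finset

noncomputable def Pr {Ω : Type} [Fintype Ω] (w : Ω → ℝ) (A : Set Ω) : ℝ :=
  ∑ ω, A.indicator w ω

noncomputable def cPr {Ω : Type} [Fintype Ω] (w : Ω → ℝ) (A B : Set Ω) : ℝ :=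
  Pr w (A ∩ B) / Pr w B

noncomputable def cExp {Ω : Type} [Fintype Ω] (w : Ω → ℝ) (f : Ω → ℝ) (B : Set Ω) : ℝ :=
  (∑ ω, B.indicator (fun ω' => w ω' * f ω') ω) / Pr w B

lemma Pr_split {Ω : Type} [Fintype Ω] (w : Ω → ℝ) (ys : Ω → Fin 2) (A : Set Ω) :
    Pr w A = Pr w ({ω | ys ω = 0} ∩ A) + Pr w ({ω | ys ω = 1} ∩ A) := by
  unfold Pr
  rw [← Finset.sum_add_distrib]
  refine Finset.sum_congr rfl fun ω _ => ?_
  have h2 : ys ω = 0 ∨ ys ω = 1 := by omega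
  rcases h2 with h | h <;> by_cases hA : ω ∈ A <;> simp [Set.indicator_apply, Set.mem_inter_iff, Set.mem_setOf_eq, h, hA]


/-- Threshold ordering: if both noise rates are below 1/2 then `UB ≤ LB`. -/
theorem stmt3 {Ω : Type} [Fintype Ω] (w : Ω → ℝ) (ty ys : Ω → Fin 2)
    (hw : ∀ ω, 0 ≤ w ω) (hsum : ∑ ω, w ω = 1)
    (hpos : ∀ r c : Fin 2, 0 < Pr w ({ω | ys ω = r} ∩ {ω | ty ω = c}))
    (hn0 : cPr w {ω | ty ω = 0} {ω | ys ω = 1} < 1/2)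
    (hn1 : cPr w {ω | ty ω = 1} {ω | ys ω = 0} < 1/2) :
    cPr w {ω | ty ω = 1} {ω | ys ω = 0} * cPr w {ω | ys ω = 0} {ω | ty ω = 0}
      + cPr w {ω | ty ω = 1} {ω | ys ω = 1} * cPr w {ω | ys ω = 1} {ω | ty ω = 0}
    ≤ cPr w {ω | ty ω = 1} {ω | ys ω = 0} * cPr w {ω | ys ω = 0} {ω | ty ω = 1}
      + cPr w {ω | ty ω = 1} {ω | ys ω = 1} * cPr w {ω | ys ω = 1} {ω | ty ω = 1} := by
  set s00 := Pr w ({ω | ys ω = 0} ∩ {ω | ty ω = 0}) with hs00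
  set s01 := Pr w ({ω | ys ω = 0} ∩ {ω | ty ω = 1}) with hs01
  set s10 := Pr w ({ω | ys ω = 1} ∩ {ω | ty ω = 0}) with hs10
  set s11 := Pr w ({ω | ys ω = 1} ∩ {ω | ty ω = 1}) with hs11
  have p00 := hpos 0 0; have p01 := hpos 0 1; have p10 := hpos 1 0; have p11 := hpos 1 1
  have hys0 : Pr w {ω | ys ω = 0} = s00 + s01 := by
    rw [Pr_split w ty {ω | ys ω = 0}, Set.inter_comm {ω | ty ω = 0},
      Set.inter_comm {ω | ty ω = 1}]
  have hys1 : Pr w {ω | ys ω = 1} = s10 + s11 := by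
    rw [Pr_split w ty {ω | ys ω = 1}, Set.inter_comm {ω | ty ω = 0},
      Set.inter_comm {ω | ty ω = 1}]
  have hty0 : Pr w {ω | ty ω = 0} = s00 + s10 := Pr_split w ys _
  have hty1 : Pr w {ω | ty ω = 1} = s01 + s11 := Pr_split w ys _
  have c1 : cPr w {ω | ty ω = 1} {ω | ys ω = 0} = s01 / (s00 + s01) := by
    rw [cPr, Set.inter_comm, hys0]
  have c2 : cPr w {ω | ty ω = 1} {ω | ys ω = 1} = s11 / (s10 + s11) := by
    rw [cPr, Set.inter_comm, hys1]
  have c3 : cPr w {ω | ys ω = 0} {ω | ty ω = 0} = s00 / (s00 + s10) := by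
    rw [cPr, hty0]
  have c4 : cPr w {ω | ys ω = 1} {ω | ty ω = 0} = s10 / (s00 + s10) := by
    rw [cPr, hty0]
  have c5 : cPr w {ω | ys ω = 0} {ω | ty ω = 1} = s01 / (s01 + s11) := by
    rw [cPr, hty1]
  have c6 : cPr w {ω | ys ω = 1} {ω | ty ω = 1} = s11 / (s01 + s11) := by
    rw [cPr, hty1]
  have cn0 : cPr w {ω | ty ω = 0} {ω | ys ω = 1} = s10 / (s10 + s11) := by
    rw [cPr, Set.inter_comm, hys1]
  rw [cn0] at hn0
  rw [c1] at hn1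
  rw [c1, c2, c3, c4, c5, c6]
  have h1 : s10 < s11 := by
    have h := (div_lt_iff₀ (by linarith)).mp hn0; linarith
  have h2 : s01 < s00 := by
    have h := (div_lt_iff₀ (by linarith)).mp hn1; linarith
  rw [← hs00] at p00; rw [← hs01] at p01; rw [← hs10] at p10; rw [← hs11] at p11
  have d0 : (0:ℝ) < s00 + s10 := by linarith
  have d1 : (0:ℝ) < s01 + s11 := by linarith
  have db : (0:ℝ) < s10 + s11 := by linarith
  have hp : s00/(s00+s10) = 1 - s10/(s00+s10) := by field_simp; ring
  have hq : s01/(s01+s11) = 1 - s11/(s01+s11) := by field_simp; ring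
  have hpq : s10/(s00+s10) ≤ s11/(s01+s11) := by
    rw [div_le_div_iff₀ d0 d1]; nlinarith
  have hb : 1/2 < s11/(s10+s11) := by rw [lt_div_iff₀ db]; linarith
  rw [hp, hq]
  nlinarith [mul_le_mul_of_nonneg_left hpq
    (show (0:ℝ) ≤ s11/(s10+s11) - s01/(s00+s01) by linarith)]
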